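/- The ideal of (ℤ/3)[b,b⁻¹,t,t⁻¹,x,x⁻¹] generated by the 2×2 minors of the matrix [[btx−bt, x²−x, bx²−bx−x²+x, bt−b²t−btx, tx],[btx−b²tx−bt²x, bt²x−t²x−btx+tx+b², btx−tx+b³−b², 0, b³t−b²t]] is a proper ideal (does not equal the whole ring). -/

import Mathlib

open LaurentPolynomial in
/-- Evaluation of a Laurent polynomial: coefficients via `f`, variable at a unit `u`. -/
noncomputable def laurentEvalHom {A S : Type*} [CommSemiring A] [CommRing S]
    (f : A →+* S) (u : Sˣ) : LaurentPolynomial A →+* S :=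
  AddMonoidAlgebra.liftNCRingHom f ((Units.coeHom S).comp (zpowersHom Sˣ u))
    (fun _ _ => Commute.all _ _)

open LaurentPolynomial in
theorem laurentEvalHom_C {A S : Type*} [CommSemiring A] [CommRing S]
    (f : A →+* S) (u : Sˣ) (a : A) : laurentEvalHom f u (C a) = f a := by
  show AddMonoidAlgebra.liftNC _ _ (AddMonoidAlgebra.single 0 a) = f a
  rw [AddMonoidAlgebra.liftNC_single]
  simp

open LaurentPolynomial in
theorem laurentEvalHom_T {A S : Type*} [CommSemiring A] [CommRing S]
    (f : A →+* S) (u : Sˣ) (n : ℤ) : laurentEvalHom f u (T n) = ((u ^ n : Sˣ) : S) := by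
  show AddMonoidAlgebra.liftNC _ _ (AddMonoidAlgebra.single n 1) = _
  rw [AddMonoidAlgebra.liftNC_single]
  simp [zpowersHom_apply]

/-- The field `GF(9) = (ℤ/3)[i]/(i²+1)`. -/
abbrev S9 : Type := AdjoinRoot (Polynomial.X ^ 2 + 1 : Polynomial (ZMod 3))

/-- The square root of `-1` in `GF(9)`. -/
noncomputable def i9 : S9 := AdjoinRoot.root _

theorem i9_sq : i9 ^ 2 = -1 := by
  have := AdjoinRoot.isRoot_root (Polynomial.X ^ 2 + 1 : Polynomial (ZMod 3))
  simp [Polynomial.IsRoot] at this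
  show AdjoinRoot.root _ ^ 2 = -1
  linear_combination this

theorem three9 : (3 : S9) = 0 := by
  have h1 : ((3 : ZMod 3) : S9) = algebraMap (ZMod 3) S9 (3 : ZMod 3) := rfl
  calc (3 : S9) = algebraMap (ZMod 3) S9 (3 : ZMod 3) := (map_ofNat _ 3).symm
    _ = algebraMap (ZMod 3) S9 0 := by rw [show (3 : ZMod 3) = 0 from rfl]
    _ = 0 := map_zero _

instance : Nontrivial S9 := by
  have hdeg : (Polynomial.X ^ 2 + 1 : Polynomial (ZMod 3)).degree ≠ 0 := by
    rw [show (1 : Polynomial (ZMod 3)) = Polynomial.C 1 by simp,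
      Polynomial.degree_X_pow_add_C (by norm_num)]
    decide
  exact AdjoinRoot.nontrivial _ hdeg

/-- `i` as a unit of `GF(9)`. -/
noncomputable def uB : S9ˣ :=
  ⟨i9, -i9, by linear_combination -i9_sq, by linear_combination -i9_sq⟩

/-- `-1+i` as a unit of `GF(9)`. -/
noncomputable def uT : S9ˣ :=
  ⟨-1 + i9, 1 + i9, by linear_combination i9_sq - three9, by linear_combination i9_sq - three9⟩

/-- `1-i` as a unit of `GF(9)`. -/
noncomputable def uX : S9ˣ :=
  ⟨1 - i9, -1 - i9, by linear_combination i9_sq - three9, by linear_combination i9_sq - three9⟩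

open LaurentPolynomial in
/-- Evaluation `(ℤ/3)[b,b⁻¹,t,t⁻¹,x,x⁻¹] → GF(9)` at `b = i`, `t = -1+i`, `x = 1-i`. -/
noncomputable def ψ9 :
    LaurentPolynomial (LaurentPolynomial (LaurentPolynomial (ZMod 3))) →+* S9 :=
  laurentEvalHom (laurentEvalHom (laurentEvalHom (algebraMap (ZMod 3) S9) uB) uT) uX

open LaurentPolynomial in
theorem ψ9_b : ψ9 (C (C (T 1))) = i9 := by
  rw [ψ9, laurentEvalHom_C, laurentEvalHom_C, laurentEvalHom_T, zpow_one]; rfl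

open LaurentPolynomial in
theorem ψ9_t : ψ9 (C (T 1)) = -1 + i9 := by
  rw [ψ9, laurentEvalHom_C, laurentEvalHom_T, zpow_one]; rfl

open LaurentPolynomial in
theorem ψ9_x : ψ9 (T 1) = 1 - i9 := by
  rw [ψ9, laurentEvalHom_T, zpow_one]; rfl

/-- If all entries of a `2×5` matrix are mapped by a ring hom to a fixed row vector,
then the ideal of its `2×2` minors is proper. -/
theorem minors_proper {R S : Type*} [CommRing R] [CommRing S] [Nontrivial S] (ψ : R →+* S)
    (P : Matrix (Fin 2) (Fin 5) R) (v : Fin 5 → S)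
    (hval : ∀ a c, ψ (P a c) = v c) :
    Ideal.span {y : R | ∃ (ρ : Fin 2 → Fin 2) (σ : Fin 2 → Fin 5),
        y = (P.submatrix ρ σ).det} ≠ ⊤ := by
  intro hTop
  have h1 : (1 : R) ∈ Ideal.span {y : R | ∃ (ρ : Fin 2 → Fin 2) (σ : Fin 2 → Fin 5),
      y = (P.submatrix ρ σ).det} := hTop ▸ Submodule.mem_top
  have hle : Ideal.span {y : R | ∃ (ρ : Fin 2 → Fin 2) (σ : Fin 2 → Fin 5),
      y = (P.submatrix ρ σ).det} ≤ RingHom.ker ψ := by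
    rw [Ideal.span_le]
    rintro y ⟨ρ, σ, rfl⟩
    rw [SetLike.mem_coe, RingHom.mem_ker, RingHom.map_det, RingHom.mapMatrix_apply, Matrix.det_fin_two]
    have e : ∀ k l, ((P.submatrix ρ σ).map ψ) k l = v (σ l) := fun k l => hval _ _
    rw [e 0 0, e 1 1, e 0 1, e 1 0, mul_comm]
    exact sub_self _
  have h0 := hle h1
  rw [RingHom.mem_ker, map_one] at h0
  exact one_ne_zero h0

open LaurentPolynomial in
/-- In `(ℤ/3)[b,b⁻¹,t,t⁻¹,x,x⁻¹]` (realized as iterated Laurent polynomials, with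
`b = C (C (T 1))`, `t = C (T 1)`, `x = T 1`), the ideal generated by the `2×2` minors of the
`2×5` matrix
`[[btx−bt, x²−x, bx²−bx−x²+x, bt−b²t−btx, tx],`
` [btx−b²tx−bt²x, bt²x−t²x−btx+tx+b², btx−tx+b³−b², 0, b³t−b²t]]`
is a proper ideal. -/
theorem stmt19 :
    letI R := LaurentPolynomial (LaurentPolynomial (LaurentPolynomial (ZMod 3)))
    letI b : R := LaurentPolynomial.C (LaurentPolynomial.C (T 1))
    letI t : R := LaurentPolynomial.C (T 1)
    letI x : R := T 1
    letI P : Matrix (Fin 2) (Fin 5) R :=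
      !![b*t*x - b*t, x^2 - x, b*x^2 - b*x - x^2 + x, b*t - b^2*t - b*t*x, t*x;
         b*t*x - b^2*t*x - b*t^2*x, b*t^2*x - t^2*x - b*t*x + t*x + b^2,
           b*t*x - t*x + b^3 - b^2, 0, b^3*t - b^2*t]
    Ideal.span {y : R | ∃ (ρ : Fin 2 → Fin 2) (σ : Fin 2 → Fin 5),
        y = (P.submatrix ρ σ).det} ≠ ⊤ := by
  refine minors_proper ψ9 _ ![2 + i9, 2 + 2*i9, 2, 0, 2*i9] ?_
  intro a c
  fin_cases a <;> fin_cases c <;>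
    simp only [Fin.reduceFinMk, Fin.zero_eta, Fin.mk_one, Fin.isValue, Matrix.cons_val', Matrix.cons_val_zero,
      Matrix.cons_val_one, Matrix.head_cons, Matrix.empty_val', Matrix.cons_val_fin_one,
      Matrix.head_fin_const, Matrix.cons_val_two, Matrix.cons_val_three, Matrix.cons_val_four,
      Matrix.tail_cons, Matrix.cons_val_succ, Matrix.of_apply,
      map_sub, map_add, map_mul, map_pow, map_zero, ψ9_b, ψ9_t, ψ9_x]
  · linear_combination ((-1)*i9 + (1)) * i9_sq + ((-1)) * three9
  · linear_combination ((1)) * i9_sq + ((-1)*i9 + (-1)) * three9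
  · linear_combination ((1)*i9 + (-2)) * i9_sq + ((0:S9)) * three9
  · linear_combination ((0:S9)) * i9_sq + ((0:S9)) * three9
  · linear_combination ((-1)) * i9_sq + ((0:S9)) * three9
  · linear_combination ((2)*i9^2 + (-6)*i9 + (4)) * i9_sq + ((1)*i9 + (-2)) * three9
  · linear_combination ((-1)*i9^2 + (5)*i9 + (-7)) * i9_sq + ((1)) * three9
  · linear_combination ((2)) * i9_sq + ((-1)*i9 + (-1)) * three9
  · linear_combination ((1)*i9^2 + (-2)*i9) * i9_sq + ((0:S9)) * three9
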